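/- arXiv:2003.00359 — 2 statements merged into one kernel-verified Lean document; each statement's English description precedes it below -/
import Mathlib

section
/- With A_t = I_d + Σ_{s=1}^{t} x_s x_sᵀ and ‖x_s‖₂ ≤ 1 for all s, the elliptical potential bound holds: Σ_{s=1}^{t} x_sᵀ A_{s-1}⁻¹ x_s ≤ 2·log(det(A_t)) ≤ 2d·log(1 + t/d). -/
open Matrix Finset Real

private lemma mul_vecMulVec_aux {n : Type*} [Fintype n] (M : Matrix n n ℝ) (u v : n → ℝ) :
    M * vecMulVec u v = vecMulVec (M *ᵥ u) v := by
  ext i j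
  simp [Matrix.mul_apply, vecMulVec_apply, mulVec, dotProduct, Finset.sum_mul, mul_assoc]

private lemma vecMulVec_mulVec_aux {n : Type*} [Fintype n] (u v y : n → ℝ) :
    vecMulVec u v *ᵥ y = fun i => u i * (v ⬝ᵥ y) := by
  ext i
  simp [mulVec, vecMulVec_apply, dotProduct, Finset.mul_sum, mul_assoc]

private lemma dot_vecMulVec_aux {n : Type*} [Fintype n] (u y : n → ℝ) :
    y ⬝ᵥ vecMulVec u u *ᵥ y = (u ⬝ᵥ y) ^ 2 := by
  rw [vecMulVec_mulVec_aux]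
  have : y ⬝ᵥ (fun i => u i * (u ⬝ᵥ y)) = (y ⬝ᵥ u) * (u ⬝ᵥ y) := by
    simp [dotProduct, Finset.sum_mul, mul_assoc]
  rw [this, dotProduct_comm, sq]

private lemma vecMulVec_posSemidef_aux {n : Type*} [Fintype n] [DecidableEq n] (u : n → ℝ) :
    (vecMulVec u u).PosSemidef := by
  refine PosSemidef.of_dotProduct_mulVec_nonneg ?_ ?_
  · ext i j
    simp [vecMulVec_apply, Matrix.conjTranspose_apply, mul_comm]
  · intro y
    have : star y = y := by ext i; simp
    rw [this, dot_vecMulVec_aux]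
    positivity

private lemma dot_sum_mulVec_aux {n : Type*} [Fintype n] (m : ℕ)
    (M : ℕ → Matrix n n ℝ) (y : n → ℝ) :
    y ⬝ᵥ (∑ r ∈ Finset.range m, M r) *ᵥ y = ∑ r ∈ Finset.range m, y ⬝ᵥ M r *ᵥ y := by
  induction m with
  | zero => simp
  | succ k ih =>
    rw [Finset.sum_range_succ, Finset.sum_range_succ, Matrix.add_mulVec, dotProduct_add, ih]

private lemma log_lb_aux {u : ℝ} (h0 : 0 ≤ u) (h1 : u ≤ 1) : u ≤ 2 * Real.log (1 + u) := by
  have h2 : (0:ℝ) < 1 + u := by linarith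
  have h3 := Real.log_le_sub_one_of_pos (show (0:ℝ) < (1+u)⁻¹ by positivity)
  rw [Real.log_inv] at h3
  have h4 : (1+u)⁻¹ - 1 = -(u/(1+u)) := by field_simp; ring
  have h5 : u / (1+u) ≤ Real.log (1+u) := by
    rw [h4] at h3; linarith
  have h6 : u / 2 ≤ u / (1+u) := by
    rw [div_le_div_iff₀ (by norm_num) h2]
    nlinarith
  linarith

theorem elliptical_potential (d t : ℕ) (hd : 0 < d) (x : ℕ → Fin d → ℝ)
    (hx : ∀ s, ∑ i, (x s i) ^ 2 ≤ 1)
    (A : ℕ → Matrix (Fin d) (Fin d) ℝ)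
    (hA : ∀ n, A n = 1 + ∑ s ∈ Finset.range n, vecMulVec (x s) (x s)) :
    (∑ s ∈ Finset.range t, x s ⬝ᵥ (A s)⁻¹ *ᵥ x s ≤ 2 * Real.log (A t).det) ∧
    2 * Real.log (A t).det ≤ 2 * d * Real.log (1 + (t : ℝ) / d) := by
  have hstar : ∀ y : Fin d → ℝ, star y = y := fun y => by ext i; simp
  -- positive definiteness
  have hsum : ∀ n, (∑ s ∈ Finset.range n, vecMulVec (x s) (x s)).PosSemidef := by
    intro n
    induction n with
    | zero => simpa using (Matrix.PosSemidef.zero : (0 : Matrix (Fin d) (Fin d) ℝ).PosSemidef)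
    | succ k ih =>
      rw [Finset.sum_range_succ]
      exact ih.add (vecMulVec_posSemidef_aux _)
  have hone : (1 : Matrix (Fin d) (Fin d) ℝ).PosDef := by
    refine PosDef.of_dotProduct_mulVec_pos Matrix.isHermitian_one fun y hy => ?_
    rw [one_mulVec, hstar]
    have h1 : y ⬝ᵥ y = ∑ i, y i ^ 2 := by simp [dotProduct, sq]
    rw [h1]
    apply Finset.sum_pos' (fun i _ => sq_nonneg _)
    obtain ⟨i, hi⟩ := Function.ne_iff.mp hy
    exact ⟨i, Finset.mem_univ _, sq_pos_iff.mpr hi⟩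
  have hpd : ∀ n, (A n).PosDef := by
    intro n
    rw [hA n]
    exact hone.add_posSemidef (hsum n)
  have hdet : ∀ n, 0 < (A n).det := fun n => (hpd n).det_pos
  -- quadratic forms bounds
  set q : ℕ → ℝ := fun s => x s ⬝ᵥ (A s)⁻¹ *ᵥ x s with hq
  have hAy : ∀ s, A s *ᵥ ((A s)⁻¹ *ᵥ x s) = x s := by
    intro s
    rw [Matrix.mulVec_mulVec, Matrix.mul_nonsing_inv _ (hdet s).ne'.isUnit, one_mulVec]
  have hq0 : ∀ s, 0 ≤ q s := by
    intro s
    have := ((hpd s).inv).posSemidef.dotProduct_mulVec_nonneg (x s)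
    rwa [hstar] at this
  have hq1 : ∀ s, q s ≤ 1 := by
    intro s
    set y : Fin d → ℝ := (A s)⁻¹ *ᵥ x s with hy
    have hqxy : q s = x s ⬝ᵥ y := rfl
    -- q s ≥ y ⬝ y  since A ⪰ 1
    have h1 : y ⬝ᵥ y ≤ q s := by
      have h2 : y ⬝ᵥ (A s *ᵥ y) = y ⬝ᵥ y + ∑ r ∈ Finset.range s, (x r ⬝ᵥ y) ^ 2 := by
        rw [hA s, Matrix.add_mulVec, dotProduct_add, one_mulVec, dot_sum_mulVec_aux]
        congr 1
        exact Finset.sum_congr rfl fun r _ => dot_vecMulVec_aux _ _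
      have h3 : y ⬝ᵥ (A s *ᵥ y) = q s := by
        rw [hAy s, hqxy, dotProduct_comm]
      have h4 : 0 ≤ ∑ r ∈ Finset.range s, (x r ⬝ᵥ y) ^ 2 :=
        Finset.sum_nonneg fun r _ => sq_nonneg _
      linarith [h2, h3.symm]
    -- Cauchy-Schwarz
    have hcs : (x s ⬝ᵥ y) ^ 2 ≤ (∑ i, x s i ^ 2) * (∑ i, y i ^ 2) := by
      simpa [dotProduct] using Finset.sum_mul_sq_le_sq_mul_sq Finset.univ (x s) y
    have hyy : y ⬝ᵥ y = ∑ i, y i ^ 2 := by simp [dotProduct, sq]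
    have hxs2 : 0 ≤ ∑ i, x s i ^ 2 := Finset.sum_nonneg fun i _ => sq_nonneg _
    have hyy0 : 0 ≤ ∑ i, y i ^ 2 := Finset.sum_nonneg fun i _ => sq_nonneg _
    have hq2 : q s ^ 2 ≤ q s := by
      rw [hqxy]
      calc (x s ⬝ᵥ y) ^ 2 ≤ (∑ i, x s i ^ 2) * (∑ i, y i ^ 2) := hcs
        _ ≤ 1 * (∑ i, y i ^ 2) := by
            apply mul_le_mul_of_nonneg_right (hx s) hyy0
        _ = ∑ i, y i ^ 2 := one_mul _
        _ ≤ x s ⬝ᵥ y := by rw [← hyy]; exact h1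
    nlinarith [hq0 s]
  -- determinant recursion
  have hdetstep : ∀ s, (A (s+1)).det = (A s).det * (1 + q s) := by
    intro s
    have h1 : A (s+1) = A s * (1 + vecMulVec ((A s)⁻¹ *ᵥ x s) (x s)) := by
      rw [Matrix.mul_add, mul_one, mul_vecMulVec_aux, hAy s, hA (s+1), hA s,
        Finset.sum_range_succ, add_assoc]
    rw [h1, det_mul]
    congr 1
    rw [vecMulVec_eq Unit, Matrix.det_one_add_replicateCol_mul_replicateRow]
  have hlogstep : ∀ s, Real.log (A (s+1)).det = Real.log (A s).det + Real.log (1 + q s) := by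
    intro s
    rw [hdetstep s, Real.log_mul (hdet s).ne' (by linarith [hq0 s])]
  -- telescoping
  have htel : ∑ s ∈ Finset.range t, Real.log (1 + q s) = Real.log (A t).det := by
    have h0 : Real.log (A 0).det = 0 := by
      rw [hA 0]; simp
    calc ∑ s ∈ Finset.range t, Real.log (1 + q s)
        = ∑ s ∈ Finset.range t, (Real.log (A (s+1)).det - Real.log (A s).det) := by
          refine Finset.sum_congr rfl fun s _ => ?_
          rw [hlogstep s]; ring
      _ = Real.log (A t).det - Real.log (A 0).det :=
          Finset.sum_range_sub (fun n => Real.log (A n).det) t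
      _ = Real.log (A t).det := by rw [h0, sub_zero]
  constructor
  · calc ∑ s ∈ Finset.range t, q s
        ≤ ∑ s ∈ Finset.range t, 2 * Real.log (1 + q s) :=
          Finset.sum_le_sum fun s _ => log_lb_aux (hq0 s) (hq1 s)
      _ = 2 * Real.log (A t).det := by rw [← Finset.mul_sum, htel]
  · -- second part: eigenvalue bound
    have hH : (A t).IsHermitian := (hpd t).isHermitian
    have hev : ∀ i, 0 < hH.eigenvalues i := (hpd t).eigenvalues_pos
    -- trace = sum of eigenvalues
    have htr : (A t).trace = ∑ i, hH.eigenvalues i := by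
      have hspec := hH.spectral_theorem
      set U : Matrix (Fin d) (Fin d) ℝ := (hH.eigenvectorUnitary : Matrix (Fin d) (Fin d) ℝ)
      have hU : star U * U = 1 := Matrix.mem_unitaryGroup_iff'.mp hH.eigenvectorUnitary.2
      calc (A t).trace
          = (U * diagonal (RCLike.ofReal ∘ hH.eigenvalues) * star U).trace := by
            exact congrArg Matrix.trace hspec
        _ = (star U * (U * diagonal (RCLike.ofReal ∘ hH.eigenvalues))).trace :=
            Matrix.trace_mul_comm _ _
        _ = (diagonal (RCLike.ofReal ∘ hH.eigenvalues)).trace := by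
            rw [← Matrix.mul_assoc, hU, one_mul]
        _ = ∑ i, hH.eigenvalues i := by
            rw [Matrix.trace_diagonal]; simp
    -- trace bound
    have htrb : (A t).trace ≤ (d:ℝ) + t := by
      rw [hA t, Matrix.trace_add, Matrix.trace_one, Matrix.trace_sum]
      have h1 : ∀ s, (vecMulVec (x s) (x s)).trace = ∑ i, x s i ^ 2 := by
        intro s; simp [Matrix.trace, Matrix.diag, vecMulVec_apply, sq]
      have h2 : ∑ s ∈ Finset.range t, (vecMulVec (x s) (x s)).trace ≤ (t:ℝ) := by
        calc ∑ s ∈ Finset.range t, (vecMulVec (x s) (x s)).trace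
            ≤ ∑ _s ∈ Finset.range t, (1:ℝ) := Finset.sum_le_sum fun s _ => by
              rw [h1 s]; exact hx s
          _ = t := by simp
      have h3 : (Fintype.card (Fin d) : ℝ) = d := by simp
      rw [h3]
      linarith
    have hd' : (0:ℝ) < d := Nat.cast_pos.mpr hd
    have hT0 : 0 < (A t).trace := by
      rw [htr]
      apply Finset.sum_pos (fun i _ => hev i)
      exact ⟨⟨0, hd⟩, Finset.mem_univ _⟩
    have hc0 : 0 < (A t).trace / d := div_pos hT0 hd'
    have hlogdet : Real.log (A t).det = ∑ i, Real.log (hH.eigenvalues i) := by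
      rw [hH.det_eq_prod_eigenvalues]
      norm_cast
      simp only [RCLike.ofReal_real_eq_id, id_eq]
      exact Real.log_prod (fun i _ => (hev i).ne')
    have hkey : ∀ i, Real.log (hH.eigenvalues i)
        ≤ Real.log ((A t).trace/d) + (hH.eigenvalues i / ((A t).trace/d) - 1) := by
      intro i
      have h1 := Real.log_le_sub_one_of_pos (div_pos (hev i) hc0)
      rw [Real.log_div (hev i).ne' hc0.ne'] at h1
      linarith
    have hTd : (A t).trace / ((A t).trace / d) = d := by
      rw [div_div_eq_mul_div, mul_comm, mul_div_assoc, div_self hT0.ne', mul_one]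
    have hsumkey : Real.log (A t).det ≤ d * Real.log ((A t).trace/d) := by
      rw [hlogdet]
      calc ∑ i, Real.log (hH.eigenvalues i)
          ≤ ∑ i, (Real.log ((A t).trace/d) + (hH.eigenvalues i / ((A t).trace/d) - 1)) :=
            Finset.sum_le_sum fun i _ => hkey i
        _ = d * Real.log ((A t).trace/d)
            + ((∑ i, hH.eigenvalues i) / ((A t).trace/d) - d) := by
            rw [Finset.sum_add_distrib, Finset.sum_sub_distrib, ← Finset.sum_div]
            simp [Finset.card_univ, mul_comm]
        _ = d * Real.log ((A t).trace/d) := by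
            rw [← htr, hTd]; ring
    have hmono : Real.log ((A t).trace/d) ≤ Real.log (1 + (t:ℝ)/d) := by
      rw [Real.log_le_log_iff hc0 (by positivity)]
      rw [div_le_iff₀ hd']
      have h5 : (1 + (t:ℝ)/d) * d = d + t := by field_simp
      rw [h5]
      exact htrb
    have h6 : (d:ℝ) * Real.log ((A t).trace/d) ≤ d * Real.log (1 + (t:ℝ)/d) :=
      mul_le_mul_of_nonneg_left hmono hd'.le
    linarith
end

section
/- UCB dominance implies regret bound: let θ, θ̂_a, θ̂_b ∈ ℝ^d, x ∈ ℝ^d, and A_a, A_b positive definite d×d matrices with α ≥ ‖θ̂_a - θ_a‖_{A_a} and α ≥ ‖θ̂_b - θ_b‖_{A_b} (A-weighted norms of estimation errors for true parameters θ_a, θ_b). If xᵀθ̂_b + α‖x‖_{A_b⁻¹} ≥ xᵀθ̂_a + α‖x‖_{A_a⁻¹}, then xᵀθ_a - xᵀθ_b ≤ 2α‖x‖_{A_b⁻¹}. -/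
open Matrix Real
open scoped MatrixOrder

lemma dot_le_sqrt_sqrt {d : ℕ} (u w : Fin d → ℝ) :
    u ⬝ᵥ w ≤ Real.sqrt (u ⬝ᵥ u) * Real.sqrt (w ⬝ᵥ w) := by
  simpa [dotProduct, pow_two] using
    Real.sum_mul_le_sqrt_mul_sqrt Finset.univ u w

lemma key {d : ℕ} (A : Matrix (Fin d) (Fin d) ℝ) (hA : A.PosDef) (x v : Fin d → ℝ) :
    x ⬝ᵥ v ≤ Real.sqrt (v ⬝ᵥ A *ᵥ v) * Real.sqrt (x ⬝ᵥ A⁻¹ *ᵥ x) := by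
  set S := CFC.sqrt A with hSdef
  have hSS : S * S = A := CFC.sqrt_mul_sqrt_self A hA.posSemidef.nonneg
  have hSsymm : Sᵀ = S := by
    have := (CFC.sqrt_nonneg A).posSemidef.1
    rw [Matrix.IsHermitian, Matrix.conjTranspose_eq_transpose_of_trivial] at this
    exact this
  have hdetA : IsUnit A.det := isUnit_iff_ne_zero.mpr hA.det_pos.ne'
  have hdetS : IsUnit S.det := by
    have : S.det * S.det = A.det := by rw [← Matrix.det_mul, hSS]
    exact isUnit_of_mul_isUnit_left (this ▸ hdetA)
  have hSinv : S * S⁻¹ = 1 := Matrix.mul_nonsing_inv S hdetS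
  have hSinv' : S⁻¹ * S = 1 := Matrix.nonsing_inv_mul S hdetS
  have hAinv : A⁻¹ = S⁻¹ * S⁻¹ := by rw [← hSS, Matrix.mul_inv_rev]
  have hSinvsymm : (S⁻¹)ᵀ = S⁻¹ := by rw [Matrix.transpose_nonsing_inv, hSsymm]
  have hx : x = S *ᵥ (S⁻¹ *ᵥ x) := by rw [Matrix.mulVec_mulVec, hSinv, Matrix.one_mulVec]
  set u := S⁻¹ *ᵥ x with hu
  set w := S *ᵥ v with hw
  have h1 : x ⬝ᵥ v = u ⬝ᵥ w := by
    conv_lhs => rw [hx]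
    rw [dotProduct_comm, Matrix.dotProduct_mulVec, ← Matrix.mulVec_transpose, hSsymm,
      dotProduct_comm]
  have h2 : v ⬝ᵥ A *ᵥ v = w ⬝ᵥ w := by
    rw [hw, ← hSS, ← Matrix.mulVec_mulVec, Matrix.dotProduct_mulVec, ← Matrix.mulVec_transpose,
      hSsymm]
  have h3 : x ⬝ᵥ A⁻¹ *ᵥ x = u ⬝ᵥ u := by
    rw [hu, hAinv, ← Matrix.mulVec_mulVec, Matrix.dotProduct_mulVec, ← Matrix.mulVec_transpose,
      hSinvsymm]
  rw [h1, h2, h3]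
  calc u ⬝ᵥ w ≤ Real.sqrt (u ⬝ᵥ u) * Real.sqrt (w ⬝ᵥ w) := dot_le_sqrt_sqrt u w
    _ = Real.sqrt (w ⬝ᵥ w) * Real.sqrt (u ⬝ᵥ u) := mul_comm _ _

theorem ucb_dominance (d : ℕ) (x θa θb θha θhb : Fin d → ℝ)
    (Aa Ab : Matrix (Fin d) (Fin d) ℝ) (hAa : Aa.PosDef) (hAb : Ab.PosDef) (α : ℝ)
    (ha : Real.sqrt ((θha - θa) ⬝ᵥ Aa *ᵥ (θha - θa)) ≤ α)
    (hb : Real.sqrt ((θhb - θb) ⬝ᵥ Ab *ᵥ (θhb - θb)) ≤ α)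
    (hucb : x ⬝ᵥ θha + α * Real.sqrt (x ⬝ᵥ Aa⁻¹ *ᵥ x) ≤
      x ⬝ᵥ θhb + α * Real.sqrt (x ⬝ᵥ Ab⁻¹ *ᵥ x)) :
    x ⬝ᵥ θa - x ⬝ᵥ θb ≤ 2 * α * Real.sqrt (x ⬝ᵥ Ab⁻¹ *ᵥ x) := by
  have hsa : Real.sqrt (x ⬝ᵥ Aa⁻¹ *ᵥ x) ≥ 0 := Real.sqrt_nonneg _
  have hsb : Real.sqrt (x ⬝ᵥ Ab⁻¹ *ᵥ x) ≥ 0 := Real.sqrt_nonneg _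
  -- x ⬝ (θa - θha) ≤ α * sqrt(x Aa⁻¹ x)
  have h1 : x ⬝ᵥ (θa - θha) ≤ α * Real.sqrt (x ⬝ᵥ Aa⁻¹ *ᵥ x) := by
    have hk := key Aa hAa x (θa - θha)
    have heq : (θa - θha) ⬝ᵥ Aa *ᵥ (θa - θha) = (θha - θa) ⬝ᵥ Aa *ᵥ (θha - θa) := by
      rw [show θa - θha = -(θha - θa) from (neg_sub _ _).symm, Matrix.mulVec_neg,
        neg_dotProduct, dotProduct_neg, neg_neg]
    rw [heq] at hk
    calc x ⬝ᵥ (θa - θha)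
        ≤ Real.sqrt ((θha - θa) ⬝ᵥ Aa *ᵥ (θha - θa)) * Real.sqrt (x ⬝ᵥ Aa⁻¹ *ᵥ x) := hk
      _ ≤ α * Real.sqrt (x ⬝ᵥ Aa⁻¹ *ᵥ x) := by
          exact mul_le_mul_of_nonneg_right ha hsa
  have h2 : x ⬝ᵥ (θhb - θb) ≤ α * Real.sqrt (x ⬝ᵥ Ab⁻¹ *ᵥ x) := by
    have hk := key Ab hAb x (θhb - θb)
    calc x ⬝ᵥ (θhb - θb)
        ≤ Real.sqrt ((θhb - θb) ⬝ᵥ Ab *ᵥ (θhb - θb)) * Real.sqrt (x ⬝ᵥ Ab⁻¹ *ᵥ x) := hk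
      _ ≤ α * Real.sqrt (x ⬝ᵥ Ab⁻¹ *ᵥ x) := mul_le_mul_of_nonneg_right hb hsb
  have e1 : x ⬝ᵥ (θa - θha) = x ⬝ᵥ θa - x ⬝ᵥ θha := by simp [dotProduct_sub]
  have e2 : x ⬝ᵥ (θhb - θb) = x ⬝ᵥ θhb - x ⬝ᵥ θb := by simp [dotProduct_sub]
  rw [e1] at h1; rw [e2] at h2
  nlinarith [hucb, h1, h2]
end
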